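/- Let A be an indecomposable real n×n matrix with a_{ij} ≤ 0 for all i ≠ j and with a_{ij} = 0 iff a_{ji} = 0 for i ≠ j. Then A satisfies exactly one of: (Fin) det A ≠ 0, there exists u > 0 with Au > 0, and Av ≥ 0 implies v > 0 or v = 0; (Aff) corank A = 1, there exists u > 0 with Au = 0, and Av ≥ 0 implies Av = 0; (Ind) there exists u > 0 with Au < 0, and Av ≥ 0 with v ≥ 0 implies v = 0. -/

import Mathlib

/-- A real square matrix is indecomposable if the index set admits no partition
into two nonempty parts with vanishing mixed entries. -/
def MatrixIndecomposable {n : ℕ} (A : Matrix (Fin n) (Fin n) ℝ) : Prop :=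
  ¬ ∃ s : Set (Fin n), s.Nonempty ∧ sᶜ.Nonempty ∧
      ∀ i ∈ s, ∀ j ∈ sᶜ, A i j = 0 ∧ A j i = 0

/-- Kac's condition (Fin). -/
def KacFin {n : ℕ} (A : Matrix (Fin n) (Fin n) ℝ) : Prop :=
  A.det ≠ 0 ∧
    (∃ u : Fin n → ℝ, (∀ i, 0 < u i) ∧ ∀ i, 0 < A.mulVec u i) ∧
    ∀ v : Fin n → ℝ, (∀ i, 0 ≤ A.mulVec v i) → (∀ i, 0 < v i) ∨ v = 0

/-- Kac's condition (Aff): `corank A = 1`, `Au = 0` for some `u > 0`, and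
`Av ≥ 0` implies `Av = 0`. -/
def KacAff {n : ℕ} (A : Matrix (Fin n) (Fin n) ℝ) : Prop :=
  A.rank + 1 = n ∧
    (∃ u : Fin n → ℝ, (∀ i, 0 < u i) ∧ A.mulVec u = 0) ∧
    ∀ v : Fin n → ℝ, (∀ i, 0 ≤ A.mulVec v i) → A.mulVec v = 0

/-- Kac's condition (Ind). -/
def KacInd {n : ℕ} (A : Matrix (Fin n) (Fin n) ℝ) : Prop :=
  (∃ u : Fin n → ℝ, (∀ i, 0 < u i) ∧ ∀ i, A.mulVec u i < 0) ∧
    ∀ v : Fin n → ℝ, (∀ i, 0 ≤ A.mulVec v i) → (∀ i, 0 ≤ v i) → v = 0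

namespace KacAux

variable {n : ℕ} {A : Matrix (Fin n) (Fin n) ℝ}

lemma edge (hindec : MatrixIndecomposable A)
    (hzero : ∀ i j : Fin n, A i j = 0 → A j i = 0)
    (s : Set (Fin n)) (h1 : s.Nonempty) (h2 : sᶜ.Nonempty) :
    ∃ i ∈ s, ∃ j ∈ sᶜ, A i j ≠ 0 ∧ A j i ≠ 0 := by
  by_contra h
  push_neg at h
  exact hindec ⟨s, h1, h2, fun i hi j hj => by
    rcases eq_or_ne (A i j) 0 with h0 | h0
    · exact ⟨h0, hzero _ _ h0⟩
    · exact absurd (fun hji => h0 (hzero _ _ hji)) (not_not.mpr (h i hi j hj h0))⟩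

/-- Kac Lemma 4.1 -/
lemma lem41 (hindec : MatrixIndecomposable A)
    (hle : ∀ i j : Fin n, i ≠ j → A i j ≤ 0)
    (hzero : ∀ i j : Fin n, A i j = 0 → A j i = 0)
    (u : Fin n → ℝ) (hu : ∀ i, 0 ≤ u i) (hAu : ∀ i, 0 ≤ A.mulVec u i) :
    (∀ i, 0 < u i) ∨ u = 0 := by
  by_cases hz : ∀ i, u i = 0
  · exact Or.inr (funext hz)
  by_cases hp : ∀ i, 0 < u i
  · exact Or.inl hp
  exfalso
  push_neg at hz hp
  set s : Set (Fin n) := {i | u i = 0} with hs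
  have h1 : s.Nonempty := by
    obtain ⟨i, hi⟩ := hp
    exact ⟨i, le_antisymm hi (hu i)⟩
  have h2 : sᶜ.Nonempty := by
    obtain ⟨i, hi⟩ := hz
    exact ⟨i, hi⟩
  obtain ⟨i, his, j, hjs, hij, -⟩ := edge hindec hzero s h1 h2
  have hne : i ≠ j := fun h => hjs (h ▸ his)
  have hterm : ∀ k, A i k * u k ≤ 0 := by
    intro k
    rcases eq_or_ne k i with rfl | hk
    · simp [his.out]
    · exact mul_nonpos_of_nonpos_of_nonneg (hle i k (Ne.symm hk)) (hu k)
  have hlt : A i j * u j < 0 := by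
    have huj : 0 < u j := lt_of_le_of_ne (hu j) (fun h => hjs h.symm)
    exact mul_neg_of_neg_of_pos (lt_of_le_of_ne (hle i j hne) hij) huj
  have : A.mulVec u i < 0 := by
    have : ∑ k, A i k * u k < ∑ k : Fin n, (0:ℝ) :=
      Finset.sum_lt_sum (fun k _ => hterm k) ⟨j, Finset.mem_univ j, hlt⟩
    simpa [Matrix.mulVec, dotProduct] using this
  exact absurd (hAu i) (not_le.mpr this)

/-- v-property in the Fin case. -/
lemma fin_vprop (hn : 0 < n) (hindec : MatrixIndecomposable A)
    (hle : ∀ i j : Fin n, i ≠ j → A i j ≤ 0)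
    (hzero : ∀ i j : Fin n, A i j = 0 → A j i = 0)
    (u : Fin n → ℝ) (hu : ∀ i, 0 < u i) (hAu : ∀ i, 0 ≤ A.mulVec u i)
    (hAu0 : A.mulVec u ≠ 0)
    (v : Fin n → ℝ) (hv : ∀ i, 0 ≤ A.mulVec v i) :
    (∀ i, 0 < v i) ∨ v = 0 := by
  by_cases hvp : ∀ i, 0 < v i
  · exact Or.inl hvp
  right
  push_neg at hvp
  obtain ⟨k, hk⟩ := hvp
  have hne : (Finset.univ : Finset (Fin n)).Nonempty := ⟨k, Finset.mem_univ k⟩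
  set t : ℝ := Finset.univ.sup' hne (fun i => -v i / u i) with ht
  have htle : ∀ i, -v i / u i ≤ t := fun i => by
    rw [ht]; exact Finset.le_sup' (fun i => -v i / u i) (Finset.mem_univ i)
  have ht0 : 0 ≤ t := le_trans (div_nonneg (neg_nonneg.mpr hk) (hu k).le) (htle k)
  set w : Fin n → ℝ := v + t • u with hw
  have hwnn : ∀ i, 0 ≤ w i := by
    intro i
    have := (div_le_iff₀ (hu i)).mp (htle i)
    simp only [hw, Pi.add_apply, Pi.smul_apply, smul_eq_mul]
    linarith
  obtain ⟨i₀, -, hi₀⟩ := Finset.exists_mem_eq_sup' hne (fun i => -v i / u i)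
  rw [← ht] at hi₀
  have hwi₀ : w i₀ = 0 := by
    simp only [hw, Pi.add_apply, Pi.smul_apply, smul_eq_mul]
    rw [hi₀, div_mul_cancel₀ _ (hu i₀).ne']
    ring
  have hAw : ∀ i, 0 ≤ A.mulVec w i := by
    intro i
    rw [hw, Matrix.mulVec_add, Matrix.mulVec_smul]
    have : 0 ≤ t * A.mulVec u i := mul_nonneg ht0 (hAu i)
    simp only [Pi.add_apply, Pi.smul_apply, smul_eq_mul]
    linarith [hv i]
  rcases lem41 hindec hle hzero w hwnn hAw with hpos | hz
  · exact absurd (hpos i₀) (by rw [hwi₀]; exact lt_irrefl 0)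
  have hveq : v = -(t • u) := by
    have := hz
    rw [hw] at this
    funext i
    have := congrFun this i
    simp only [Pi.add_apply, Pi.smul_apply, smul_eq_mul, Pi.zero_apply] at this
    simp only [Pi.neg_apply, Pi.smul_apply, smul_eq_mul]
    linarith
  have ht00 : t = 0 := by
    by_contra htne
    have htpos : 0 < t := lt_of_le_of_ne ht0 (Ne.symm htne)
    have hAv : A.mulVec v = -(t • A.mulVec u) := by
      rw [hveq, Matrix.mulVec_neg, Matrix.mulVec_smul]
    obtain ⟨j, hj⟩ : ∃ j, A.mulVec u j ≠ 0 := by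
      by_contra h
      push_neg at h
      exact hAu0 (funext h)
    have hjpos : 0 < A.mulVec u j := lt_of_le_of_ne (hAu j) (Ne.symm hj)
    have : A.mulVec v j < 0 := by
      rw [hAv]
      simp only [Pi.neg_apply, Pi.smul_apply, smul_eq_mul]
      nlinarith
    exact absurd (hv j) (not_le.mpr this)
  rw [hveq, ht00]
  simp

/-- kill property in the Ind case. -/
lemma ind_kill (hn : 0 < n) (hindec : MatrixIndecomposable A)
    (hle : ∀ i j : Fin n, i ≠ j → A i j ≤ 0)
    (hzero : ∀ i j : Fin n, A i j = 0 → A j i = 0)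
    (u : Fin n → ℝ) (hu : ∀ i, 0 < u i) (hAu : ∀ i, A.mulVec u i < 0)
    (v : Fin n → ℝ) (hAv : ∀ i, 0 ≤ A.mulVec v i) (hv : ∀ i, 0 ≤ v i) :
    v = 0 := by
  have hne : (Finset.univ : Finset (Fin n)).Nonempty :=
    ⟨⟨0, hn⟩, Finset.mem_univ _⟩
  set s : ℝ := Finset.univ.inf' hne (fun i => v i / u i) with hs
  have hsle : ∀ i, s ≤ v i / u i := fun i => by
    rw [hs]; exact Finset.inf'_le (fun i => v i / u i) (Finset.mem_univ i)
  obtain ⟨i₀, -, hi₀⟩ := Finset.exists_mem_eq_inf' hne (fun i => v i / u i)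
  rw [← hs] at hi₀
  have hs0 : 0 ≤ s := by
    rw [hi₀]
    exact div_nonneg (hv i₀) (hu i₀).le
  set w : Fin n → ℝ := v - s • u with hw
  have hwnn : ∀ i, 0 ≤ w i := by
    intro i
    have := (le_div_iff₀ (hu i)).mp (hsle i)
    simp only [hw, Pi.sub_apply, Pi.smul_apply, smul_eq_mul]
    linarith
  have hwi₀ : w i₀ = 0 := by
    simp only [hw, Pi.sub_apply, Pi.smul_apply, smul_eq_mul]
    rw [hi₀, div_mul_cancel₀ _ (hu i₀).ne']
    ring
  have hAw : ∀ i, 0 ≤ A.mulVec w i := by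
    intro i
    rw [hw, Matrix.mulVec_sub, Matrix.mulVec_smul]
    have : s * A.mulVec u i ≤ 0 := mul_nonpos_of_nonneg_of_nonpos hs0 (hAu i).le
    simp only [Pi.sub_apply, Pi.smul_apply, smul_eq_mul]
    linarith [hAv i]
  rcases lem41 hindec hle hzero w hwnn hAw with hpos | hz
  · exact absurd (hpos i₀) (by rw [hwi₀]; exact lt_irrefl 0)
  have hveq : v = s • u := by
    funext i
    have := congrFun hz i
    simp only [hw, Pi.sub_apply, Pi.smul_apply, smul_eq_mul, Pi.zero_apply] at this
    simp only [Pi.smul_apply, smul_eq_mul]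
    linarith
  have hs00 : s = 0 := by
    by_contra hsne
    have hspos : 0 < s := lt_of_le_of_ne hs0 (Ne.symm hsne)
    have : A.mulVec v i₀ < 0 := by
      rw [hveq, Matrix.mulVec_smul]
      simp only [Pi.smul_apply, smul_eq_mul]
      nlinarith [hAu i₀]
    exact absurd (hAv i₀) (not_le.mpr this)
  rw [hveq, hs00]
  simp

/-- In the Aff case: any v with Av ≥ 0 is a multiple of u. -/
lemma aff_prop (hn : 0 < n) (hindec : MatrixIndecomposable A)
    (hle : ∀ i j : Fin n, i ≠ j → A i j ≤ 0)
    (hzero : ∀ i j : Fin n, A i j = 0 → A j i = 0)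
    (u : Fin n → ℝ) (hu : ∀ i, 0 < u i) (hAu : A.mulVec u = 0)
    (v : Fin n → ℝ) (hAv : ∀ i, 0 ≤ A.mulVec v i) :
    ∃ m : ℝ, v = m • u := by
  have hne : (Finset.univ : Finset (Fin n)).Nonempty := ⟨⟨0, hn⟩, Finset.mem_univ _⟩
  set m : ℝ := Finset.univ.inf' hne (fun i => v i / u i) with hm
  have hmle : ∀ i, m ≤ v i / u i := fun i => by
    rw [hm]; exact Finset.inf'_le (fun i => v i / u i) (Finset.mem_univ i)
  refine ⟨m, ?_⟩
  -- s = set of indices achieving ratio m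
  set s : Set (Fin n) := {i | v i = m * u i} with hs
  have hmem : ∀ i, i ∈ s ↔ v i / u i = m := by
    intro i
    constructor
    · intro hi
      rw [hi.out, mul_div_assoc, div_self (hu i).ne', mul_one]
    · intro hi
      exact (div_eq_iff (hu i).ne').mp hi
  have h1 : s.Nonempty := by
    obtain ⟨i₀, -, hi₀⟩ := Finset.exists_mem_eq_inf' hne (fun i => v i / u i)
    exact ⟨i₀, (hmem i₀).mpr (by rw [← hm] at hi₀; exact hi₀.symm)⟩
  by_cases h2 : sᶜ.Nonempty
  · exfalso
    -- derive the decomposition contradiction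
    obtain ⟨i, his, j, hjs, hij, -⟩ := edge hindec hzero s h1 h2
    -- show all terms A i k * (v k - m * u k) are ≤ 0 and sum to (Av)_i ≥ 0
    have hAvi : A.mulVec v i = ∑ k, A i k * (v k - m * u k) := by
      have h0 : A.mulVec u i = 0 := by rw [hAu]; rfl
      have h0' : ∑ k, A i k * u k = 0 := by
        simpa [Matrix.mulVec, dotProduct] using h0
      have : ∑ k, A i k * (v k - m * u k)
          = (∑ k, A i k * v k) - m * ∑ k, A i k * u k := by
        rw [Finset.mul_sum, ← Finset.sum_sub_distrib]
        congr 1; funext k; ring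
      rw [this, h0', mul_zero, sub_zero]
      simp [Matrix.mulVec, dotProduct]
  -- each term nonpositive
    have hterm : ∀ k, A i k * (v k - m * u k) ≤ 0 := by
      intro k
      by_cases hk : k ∈ s
      · simp [hk.out]
      · have hkne : i ≠ k := fun h => hk (h ▸ his)
        have hpos : 0 < v k - m * u k := by
          have h1 : m < v k / u k := lt_of_le_of_ne (hmle k) (fun h => hk ((hmem k).mpr h.symm))
          have := (lt_div_iff₀ (hu k)).mp h1
          linarith
        exact mul_nonpos_of_nonpos_of_nonneg (hle i k hkne) hpos.le
    have hsum0 : ∑ k, A i k * (v k - m * u k) = 0 :=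
      le_antisymm (Finset.sum_nonpos (fun k _ => hterm k)) (by rw [← hAvi]; exact hAv i)
    have hallzero : ∀ k, A i k * (v k - m * u k) = 0 :=
      fun k => (Finset.sum_eq_zero_iff_of_nonpos (fun k _ => hterm k)).mp hsum0 k (Finset.mem_univ k)
    have : A i j = 0 := by
      have hpos : 0 < v j - m * u j := by
        have h1 : m < v j / u j := lt_of_le_of_ne (hmle j) (fun h => hjs ((hmem j).mpr h.symm))
        have := (lt_div_iff₀ (hu j)).mp h1
        linarith
      have := hallzero j
      rcases mul_eq_zero.mp this with h | h
      · exact h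
      · linarith
    exact hij this
  · -- s = univ, so v = m • u
    rw [Set.not_nonempty_iff_eq_empty, ← Set.compl_univ, compl_inj_iff] at h2
    funext i
    have hi : i ∈ s := h2 ▸ Set.mem_univ i
    simpa using hi.out

lemma mulVec_nonneg {B : Matrix (Fin n) (Fin n) ℝ} (hBnn : ∀ i j, 0 ≤ B i j)
    {z : Fin n → ℝ} (hz : ∀ i, 0 ≤ z i) : ∀ i, 0 ≤ B.mulVec z i := by
  intro i
  simp only [Matrix.mulVec, dotProduct]
  exact Finset.sum_nonneg (fun j _ => mul_nonneg (hBnn i j) (hz j))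

lemma power_pos {B : Matrix (Fin n) (Fin n) ℝ} (hBnn : ∀ i j, 0 ≤ B i j)
    (hconn : ∀ s : Set (Fin n), s.Nonempty → sᶜ.Nonempty →
      ∃ j ∈ sᶜ, ∃ i ∈ s, 0 < B j i) :
    ∀ (k : ℕ) (z : Fin n → ℝ), (∀ i, 0 ≤ z i) → z ≠ 0 →
      n ≤ k + (Finset.univ.filter (fun i => 0 < z i)).card →
      ∀ i, 0 < ((1 + B) ^ k).mulVec z i := by
  intro k
  induction k with
  | zero =>
    intro z hz hz0 hcard i
    rw [pow_zero, Matrix.one_mulVec]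
    have hcard' : (Finset.univ.filter (fun i => 0 < z i)).card = n := by
      have hle : (Finset.univ.filter (fun i => 0 < z i)).card ≤ n := by
        simpa using Finset.card_filter_le Finset.univ (fun i => 0 < z i)
      omega
    have huniv : Finset.univ.filter (fun i => 0 < z i) = Finset.univ :=
      Finset.eq_univ_of_card _ (by simpa using hcard')
    have : i ∈ Finset.univ.filter (fun i => 0 < z i) := by
      rw [huniv]; exact Finset.mem_univ i
    exact (Finset.mem_filter.mp this).2
  | succ k ih =>
    intro z hz hz0 hcard i
    set z' : Fin n → ℝ := z + B.mulVec z with hz'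
    have hstep : ((1 + B) ^ (k+1)).mulVec z = ((1 + B) ^ k).mulVec z' := by
      rw [pow_succ, ← Matrix.mulVec_mulVec, hz', Matrix.add_mulVec, Matrix.one_mulVec]
    have hz'nn : ∀ i, 0 ≤ z' i := fun i =>
      add_nonneg (hz i) (mulVec_nonneg hBnn hz i)
    have hz'ge : ∀ i, z i ≤ z' i := fun i => by
      simp only [hz', Pi.add_apply]
      linarith [mulVec_nonneg hBnn hz i]
    obtain ⟨i₁, hi₁⟩ : ∃ i, 0 < z i := by
      by_contra h
      push_neg at h
      exact hz0 (funext (fun i => le_antisymm (h i) (hz i)))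
    have hz'0 : z' ≠ 0 := by
      intro h
      have := congrFun h i₁
      simp only [Pi.zero_apply] at this
      linarith [hz'ge i₁]
    have hsub : Finset.univ.filter (fun i => 0 < z i) ⊆
        Finset.univ.filter (fun i => 0 < z' i) := by
      intro j hj
      simp only [Finset.mem_filter, Finset.mem_univ, true_and] at hj ⊢
      exact lt_of_lt_of_le hj (hz'ge j)
    rw [hstep]
    by_cases huniv : Finset.univ.filter (fun i => 0 < z i) = Finset.univ
    · refine ih z' hz'nn hz'0 ?_ i
      have : Finset.univ.filter (fun i => 0 < z' i) = Finset.univ :=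
        Finset.eq_univ_of_forall (fun j => by
          simp only [Finset.mem_filter, Finset.mem_univ, true_and]
          have hjmem : j ∈ Finset.univ.filter (fun i => 0 < z i) := by
            rw [huniv]; exact Finset.mem_univ j
          exact lt_of_lt_of_le (Finset.mem_filter.mp hjmem).2 (hz'ge j))
      rw [this]
      simp only [Finset.card_univ, Fintype.card_fin]
      omega
    · set s : Set (Fin n) := {i | 0 < z i} with hsdef
      have hs1 : s.Nonempty := ⟨i₁, hi₁⟩
      have hs2 : sᶜ.Nonempty := by
        by_contra h
        rw [Set.not_nonempty_iff_eq_empty, ← Set.compl_univ, compl_inj_iff] at h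
        exact huniv (Finset.eq_univ_of_forall (fun j => by
          simp only [Finset.mem_filter, Finset.mem_univ, true_and]
          exact (h ▸ Set.mem_univ j : j ∈ s)))
      obtain ⟨j₀, hj₀, i₀, hi₀, hB0⟩ := hconn s hs1 hs2
      have hj₀pos : 0 < z' j₀ := by
        have h1 : 0 < B.mulVec z j₀ := by
          have : B j₀ i₀ * z i₀ ≤ ∑ l, B j₀ l * z l :=
            Finset.single_le_sum (fun l _ => mul_nonneg (hBnn j₀ l) (hz l))
              (Finset.mem_univ i₀)
          have h2 : 0 < B j₀ i₀ * z i₀ := mul_pos hB0 hi₀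
          simp only [Matrix.mulVec, dotProduct]
          linarith
        have := hz j₀
        simp only [hz', Pi.add_apply]
        linarith
      have hj₀notin : j₀ ∉ Finset.univ.filter (fun i => 0 < z i) := by
        simp only [Finset.mem_filter, Finset.mem_univ, true_and]
        exact fun h => hj₀ h
      have hssub : Finset.univ.filter (fun i => 0 < z i) ⊂
          Finset.univ.filter (fun i => 0 < z' i) := by
        refine ⟨hsub, fun h => hj₀notin (h ?_)⟩
        simp only [Finset.mem_filter, Finset.mem_univ, true_and]
        exact hj₀pos
      have hcard' := Finset.card_lt_card hssub
      exact ih z' hz'nn hz'0 (by omega) i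

/-- Perron–Frobenius: existence of a positive eigenvector. -/
lemma pf_exists (hn : 0 < n) (A : Matrix (Fin n) (Fin n) ℝ)
    (hindec : MatrixIndecomposable A)
    (hle : ∀ i j : Fin n, i ≠ j → A i j ≤ 0)
    (hzero : ∀ i j : Fin n, A i j = 0 → A j i = 0) :
    ∃ (u : Fin n → ℝ) (l : ℝ), (∀ i, 0 < u i) ∧ A.mulVec u = l • u := by
  have hne : (Finset.univ : Finset (Fin n)).Nonempty := ⟨⟨0, hn⟩, Finset.mem_univ _⟩
  set c : ℝ := 1 + Finset.univ.sup' hne (fun i => A i i) with hc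
  set B : Matrix (Fin n) (Fin n) ℝ := c • (1 : Matrix (Fin n) (Fin n) ℝ) - A with hB
  have hBoff : ∀ i j, i ≠ j → B i j = - A i j := by
    intro i j hij
    simp [hB, Matrix.one_apply_ne hij, Matrix.sub_apply, Matrix.smul_apply]
  have hBdiag : ∀ i, 1 ≤ B i i := by
    intro i
    have : A i i ≤ Finset.univ.sup' hne (fun i => A i i) :=
      Finset.le_sup' (fun i => A i i) (Finset.mem_univ i)
    simp only [hB, Matrix.sub_apply, Matrix.smul_apply, Matrix.one_apply_eq, smul_eq_mul,
      mul_one, hc]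
    linarith
  have hBnn : ∀ i j, 0 ≤ B i j := by
    intro i j
    rcases eq_or_ne i j with rfl | hij
    · linarith [hBdiag i]
    · rw [hBoff i j hij]
      linarith [hle i j hij]
  have hconn : ∀ s : Set (Fin n), s.Nonempty → sᶜ.Nonempty →
      ∃ j ∈ sᶜ, ∃ i ∈ s, 0 < B j i := by
    intro s h1 h2
    obtain ⟨i, his, j, hjs, -, hji⟩ := edge hindec hzero s h1 h2
    have hij : j ≠ i := fun h => hjs (h ▸ his)
    refine ⟨j, hjs, i, his, ?_⟩
    rw [hBoff j i hij]
    have := hle j i hij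
    rcases lt_or_eq_of_le this with h | h
    · linarith
    · exact absurd h hji
  -- mulVec relation
  have hmv : ∀ x : Fin n → ℝ, A.mulVec x = c • x - B.mulVec x := by
    intro x
    rw [hB, Matrix.sub_mulVec, Matrix.smul_mulVec, Matrix.one_mulVec]
    abel
  -- the compact feasibility set
  set M : ℝ := ∑ i, ∑ j, B i j with hM
  have hM0 : 0 ≤ M :=
    Finset.sum_nonneg (fun i _ => Finset.sum_nonneg (fun j _ => hBnn i j))
  set K : Set (ℝ × (Fin n → ℝ)) :=
    {p | p.1 ∈ Set.Icc 0 M ∧ p.2 ∈ stdSimplex ℝ (Fin n) ∧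
      ∀ i, p.1 * p.2 i ≤ B.mulVec p.2 i} with hK
  have hmvcont : ∀ i : Fin n, Continuous (fun p : ℝ × (Fin n → ℝ) => B.mulVec p.2 i) := by
    intro i
    simp only [Matrix.mulVec, dotProduct]
    exact continuous_finset_sum _ (fun j _ =>
      continuous_const.mul ((continuous_apply j).comp continuous_snd))
  have hKclosed : IsClosed K := by
    have h1 : IsClosed {p : ℝ × (Fin n → ℝ) | p.1 ∈ Set.Icc 0 M} :=
      isClosed_Icc.preimage continuous_fst
    have h2 : IsClosed {p : ℝ × (Fin n → ℝ) | p.2 ∈ stdSimplex ℝ (Fin n)} :=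
      (isClosed_stdSimplex _ _).preimage continuous_snd
    have h3 : IsClosed {p : ℝ × (Fin n → ℝ) | ∀ i, p.1 * p.2 i ≤ B.mulVec p.2 i} := by
      have : {p : ℝ × (Fin n → ℝ) | ∀ i, p.1 * p.2 i ≤ B.mulVec p.2 i} =
          ⋂ i, {p : ℝ × (Fin n → ℝ) | p.1 * p.2 i ≤ B.mulVec p.2 i} := by
        ext p; simp [Set.mem_iInter]
      rw [this]
      exact isClosed_iInter (fun i => isClosed_le
        (continuous_fst.mul ((continuous_apply i).comp continuous_snd)) (hmvcont i))
    have : K = {p : ℝ × (Fin n → ℝ) | p.1 ∈ Set.Icc 0 M} ∩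
        ({p | p.2 ∈ stdSimplex ℝ (Fin n)} ∩
         {p | ∀ i, p.1 * p.2 i ≤ B.mulVec p.2 i}) := by
      ext p; simp [hK, and_assoc]
    rw [this]
    exact h1.inter (h2.inter h3)
  have hKsub : K ⊆ (Set.Icc 0 M) ×ˢ stdSimplex ℝ (Fin n) := by
    rintro ⟨l, x⟩ ⟨h1, h2, -⟩
    exact ⟨h1, h2⟩
  have hKcompact : IsCompact K :=
    ((isCompact_Icc).prod (isCompact_stdSimplex _ _)).of_isClosed_subset hKclosed hKsub
  have hKne : K.Nonempty := by
    refine ⟨(0, fun _ => (n : ℝ)⁻¹), ⟨le_refl 0, hM0⟩, ?_, ?_⟩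
    · constructor
      · intro i
        positivity
      · rw [Finset.sum_const, Finset.card_univ, Fintype.card_fin, nsmul_eq_mul]
        field_simp
    · intro i
      rw [zero_mul]
      exact mulVec_nonneg hBnn (fun i => by positivity) i
  -- the sup
  set Λ : Set ℝ := Prod.fst '' K with hΛ
  have hΛcompact : IsCompact Λ := hKcompact.image continuous_fst
  have hΛne : Λ.Nonempty := hKne.image _
  set ρ : ℝ := sSup Λ with hρ
  have hρmem : ρ ∈ Λ := hΛcompact.sSup_mem hΛne
  obtain ⟨⟨ρ', u⟩, hpK, hfst⟩ := hρmem
  simp only at hfst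
  subst hfst
  obtain ⟨hρIcc, huS, hfeas⟩ := hpK
  have hu0 : u ≠ 0 := by
    intro h
    have := huS.2
    rw [h] at this
    simp at this
  have hunn : ∀ i, 0 ≤ u i := huS.1
  -- the bound lemma
  have hbound : ∀ (l : ℝ) (x : Fin n → ℝ), x ∈ stdSimplex ℝ (Fin n) →
      (∀ i, l * x i ≤ B.mulVec x i) → l ≤ M := by
    intro l x hx hfx
    have hx1 : ∀ j, x j ≤ 1 := by
      intro j
      rw [← hx.2]
      exact Finset.single_le_sum (fun i _ => hx.1 i) (Finset.mem_univ j)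
    calc l = l * ∑ i, x i := by rw [hx.2, mul_one]
      _ = ∑ i, l * x i := Finset.mul_sum _ _ _
      _ ≤ ∑ i, B.mulVec x i := Finset.sum_le_sum (fun i _ => hfx i)
      _ = ∑ i, ∑ j, B i j * x j := by
          simp [Matrix.mulVec, dotProduct]
      _ ≤ ∑ i, ∑ j, B i j := by
          refine Finset.sum_le_sum (fun i _ => Finset.sum_le_sum (fun j _ => ?_))
          nlinarith [hBnn i j, hx.1 j, hx1 j]
      _ = M := hM.symm
  -- eigenvector property
  set z : Fin n → ℝ := B.mulVec u - ρ • u with hz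
  have hznn : ∀ i, 0 ≤ z i := by
    intro i
    simp only [hz, Pi.sub_apply, Pi.smul_apply, smul_eq_mul]
    linarith [hfeas i]
  have hzeq : z = 0 := by
    by_contra hz0
    set P : Matrix (Fin n) (Fin n) ℝ := (1 + B) ^ n with hP
    have hcomm : P * B = B * P := by
      have : Commute (1 + B) B := (Commute.one_left B).add_left (Commute.refl B)
      exact (this.pow_left n).eq
    set w : Fin n → ℝ := P.mulVec u with hw
    have hwpos : ∀ i, 0 < w i :=
      power_pos hBnn hconn n u hunn hu0 (Nat.le_add_right n _)
    set y : Fin n → ℝ := P.mulVec z with hy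
    have hypos : ∀ i, 0 < y i :=
      power_pos hBnn hconn n z hznn hz0 (Nat.le_add_right n _)
    have hyw : y = B.mulVec w - ρ • w := by
      rw [hy, hz, Matrix.mulVec_sub, Matrix.mulVec_smul, hw,
        Matrix.mulVec_mulVec, hcomm, ← Matrix.mulVec_mulVec]
    set δ : ℝ := Finset.univ.inf' hne (fun i => y i / w i) with hδ
    have hδpos : 0 < δ := by
      rw [hδ, Finset.lt_inf'_iff]
      exact fun i _ => div_pos (hypos i) (hwpos i)
    have hδle : ∀ i, δ * w i ≤ y i := by
      intro i
      have h1 : δ ≤ y i / w i := by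
        rw [hδ]; exact Finset.inf'_le (fun i => y i / w i) (Finset.mem_univ i)
      exact (le_div_iff₀ (hwpos i)).mp h1 |>.trans_eq rfl
    have himp : ∀ i, (ρ + δ) * w i ≤ B.mulVec w i := by
      intro i
      have := congrFun hyw i
      simp only [Pi.sub_apply, Pi.smul_apply, smul_eq_mul] at this
      have h2 := hδle i
      nlinarith [this]
    -- normalize
    set S : ℝ := ∑ i, w i with hS
    have hSpos : 0 < S := Finset.sum_pos (fun i _ => hwpos i) hne
    set u' : Fin n → ℝ := S⁻¹ • w with hu'
    have hu'S : u' ∈ stdSimplex ℝ (Fin n) := by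
      constructor
      · intro i
        simp only [hu', Pi.smul_apply, smul_eq_mul]
        exact mul_nonneg (inv_nonneg.mpr hSpos.le) (hwpos i).le
      · simp only [hu', Pi.smul_apply, smul_eq_mul]
        rw [← Finset.mul_sum, ← hS, inv_mul_cancel₀ hSpos.ne']
    have hfeas' : ∀ i, (ρ + δ) * u' i ≤ B.mulVec u' i := by
      intro i
      rw [hu', Matrix.mulVec_smul]
      simp only [Pi.smul_apply, smul_eq_mul]
      have := himp i
      have hSinv : 0 ≤ S⁻¹ := by positivity
      nlinarith
    have hρδM : ρ + δ ≤ M := hbound _ _ hu'S hfeas'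
    have hρδ0 : 0 ≤ ρ + δ := by
      have := hρIcc.1
      linarith
    have hmem : ρ + δ ∈ Λ := ⟨(ρ + δ, u'), ⟨⟨hρδ0, hρδM⟩, hu'S, hfeas'⟩, rfl⟩
    have : ρ + δ ≤ ρ := le_csSup (hΛcompact.bddAbove) hmem
    linarith
  have hBu : B.mulVec u = ρ • u := by
    have := hzeq
    rw [hz, sub_eq_zero] at this
    exact this
  -- now u > 0
  have hρ0 : 0 ≤ ρ := hρIcc.1
  have hpow : ∀ k : ℕ, ((1 + B) ^ k).mulVec u = ((1 + ρ) ^ k) • u := by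
    intro k
    induction k with
    | zero => simp [Matrix.one_mulVec]
    | succ k ih =>
      rw [pow_succ, ← Matrix.mulVec_mulVec, Matrix.add_mulVec, Matrix.one_mulVec, hBu]
      have : u + ρ • u = (1 + ρ) • u := by
        funext i
        simp only [Pi.add_apply, Pi.smul_apply, smul_eq_mul]
        ring
      rw [this, Matrix.mulVec_smul, ih, smul_smul]
      congr 1
      ring
  have hupos : ∀ i, 0 < u i := by
    intro i
    have h1 : 0 < ((1 + B) ^ n).mulVec u i :=
      power_pos hBnn hconn n u hunn hu0 (Nat.le_add_right n _) i
    rw [hpow n] at h1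
    simp only [Pi.smul_apply, smul_eq_mul] at h1
    have hpp : 0 < (1 + ρ) ^ n := by positivity
    nlinarith
  refine ⟨u, c - ρ, hupos, ?_⟩
  rw [hmv u, hBu]
  funext i
  simp only [Pi.sub_apply, Pi.smul_apply, smul_eq_mul]
  ring

lemma aff_case (hn : 0 < n) (A : Matrix (Fin n) (Fin n) ℝ)
    (u : Fin n → ℝ) (hu : ∀ i, 0 < u i) (hAu : A.mulVec u = 0)
    (haff : ∀ v : Fin n → ℝ, (∀ i, 0 ≤ A.mulVec v i) → ∃ m : ℝ, v = m • u) :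
    A.rank + 1 = n ∧
      (∃ u : Fin n → ℝ, (∀ i, 0 < u i) ∧ A.mulVec u = 0) ∧
      ∀ v : Fin n → ℝ, (∀ i, 0 ≤ A.mulVec v i) → A.mulVec v = 0 := by
  have hthird : ∀ v : Fin n → ℝ, (∀ i, 0 ≤ A.mulVec v i) → A.mulVec v = 0 := by
    intro v hv
    obtain ⟨m, rfl⟩ := haff v hv
    rw [Matrix.mulVec_smul, hAu, smul_zero]
  refine ⟨?_, ⟨u, hu, hAu⟩, hthird⟩
  have hu0 : u ≠ 0 := by
    intro h
    have := hu ⟨0, hn⟩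
    rw [h] at this
    exact lt_irrefl 0 this
  have hker : LinearMap.ker A.mulVecLin = Submodule.span ℝ {u} := by
    apply le_antisymm
    · intro v hv
      rw [LinearMap.mem_ker, Matrix.mulVecLin_apply] at hv
      obtain ⟨m, rfl⟩ := haff v (fun i => by rw [hv]; exact le_refl 0)
      exact Submodule.mem_span_singleton.mpr ⟨m, rfl⟩
    · rw [Submodule.span_le, Set.singleton_subset_iff]
      rw [SetLike.mem_coe, LinearMap.mem_ker, Matrix.mulVecLin_apply]
      exact hAu
  have hrn := LinearMap.finrank_range_add_finrank_ker A.mulVecLin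
  rw [hker, finrank_span_singleton hu0, Module.finrank_fin_fun] at hrn
  rw [Matrix.rank]
  omega

end KacAux

/-- Theorem `thm:CMclassification` (Kac's trichotomy): an indecomposable real
matrix with nonpositive off-diagonal entries and symmetric vanishing satisfies
exactly one of (Fin), (Aff), (Ind). -/
theorem stmt_11 {n : ℕ} (hn : 0 < n) (A : Matrix (Fin n) (Fin n) ℝ)
    (hindec : MatrixIndecomposable A)
    (hle : ∀ i j : Fin n, i ≠ j → A i j ≤ 0)
    (hzero : ∀ i j : Fin n, A i j = 0 → A j i = 0) :
    (KacFin A ∧ ¬ KacAff A ∧ ¬ KacInd A) ∨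
      (¬ KacFin A ∧ KacAff A ∧ ¬ KacInd A) ∨
      (¬ KacFin A ∧ ¬ KacAff A ∧ KacInd A) := by
  obtain ⟨u, l, hu, hAu⟩ := KacAux.pf_exists hn A hindec hle hzero
  have hFA : KacFin A → KacAff A → False := by
    rintro ⟨-, ⟨w, hw, hAw⟩, -⟩ ⟨-, -, haff⟩
    have h := haff w (fun i => (hAw i).le)
    have h0 := hAw ⟨0, hn⟩
    rw [h] at h0
    simpa using h0
  have hFI : KacFin A → KacInd A → False := by
    rintro ⟨-, ⟨w, hw, hAw⟩, -⟩ ⟨-, hkill⟩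
    have h := hkill w (fun i => (hAw i).le) (fun i => (hw i).le)
    have h0 := hw ⟨0, hn⟩
    rw [h] at h0
    simpa using h0
  have hAI : KacAff A → KacInd A → False := by
    rintro ⟨-, ⟨w, hw, hAw⟩, -⟩ ⟨-, hkill⟩
    have h := hkill w (fun i => by rw [hAw]; exact le_refl 0) (fun i => (hw i).le)
    have h0 := hw ⟨0, hn⟩
    rw [h] at h0
    simpa using h0
  rcases lt_trichotomy l 0 with hl | hl | hl
  · -- (Ind)
    have hAult : ∀ i, A.mulVec u i < 0 := fun i => by
      rw [hAu]
      simpa using mul_neg_of_neg_of_pos hl (hu i)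
    have hind : KacInd A :=
      ⟨⟨u, hu, hAult⟩, fun v hAv hv =>
        KacAux.ind_kill hn hindec hle hzero u hu hAult v hAv hv⟩
    exact Or.inr (Or.inr ⟨fun hF => hFI hF hind, fun hA => hAI hA hind, hind⟩)
  · -- (Aff)
    have hAu0 : A.mulVec u = 0 := by rw [hAu, hl, zero_smul]
    have haff := fun v hv => KacAux.aff_prop hn hindec hle hzero u hu hAu0 v hv
    have hA : KacAff A := KacAux.aff_case hn A u hu hAu0 haff
    exact Or.inr (Or.inl ⟨fun hF => hFA hF hA, hA, fun hI => hAI hA hI⟩)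
  · -- (Fin)
    have hAupos : ∀ i, 0 < A.mulVec u i := fun i => by
      rw [hAu]
      simpa using mul_pos hl (hu i)
    have hAune : A.mulVec u ≠ 0 := by
      intro h
      have := hAupos ⟨0, hn⟩
      rw [h] at this
      simpa using this
    have hvprop : ∀ v : Fin n → ℝ, (∀ i, 0 ≤ A.mulVec v i) → (∀ i, 0 < v i) ∨ v = 0 :=
      fun v hv => KacAux.fin_vprop hn hindec hle hzero u hu
        (fun i => (hAupos i).le) hAune v hv
    have hdet : A.det ≠ 0 := by
      intro h
      obtain ⟨v, hv0, hAv⟩ := Matrix.exists_mulVec_eq_zero_iff.mpr h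
      rcases hvprop v (fun i => by rw [hAv]; exact le_refl 0) with hp | hz
      · rcases hvprop (-v) (fun i => by rw [Matrix.mulVec_neg, hAv]; simp) with hp' | hz'
        · have h1 := hp ⟨0, hn⟩
          have h2 := hp' ⟨0, hn⟩
          simp only [Pi.neg_apply] at h2
          linarith
        · exact hv0 (neg_eq_zero.mp hz')
      · exact hv0 hz
    have hF : KacFin A := ⟨hdet, ⟨u, hu, hAupos⟩, hvprop⟩
    exact Or.inl ⟨hF, fun hA => hFA hF hA, fun hI => hFI hF hI⟩
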